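/- Suppose for some unit vector v ∈ S^{d-1} ∩ H_x (where H_x is the hyperplane through 0 normal to x ∈ X) the orthogonal projections of X_C^+ \ {x} onto H_x all have strictly positive inner product with v and the projections of X_C^- all have strictly negative inner product with v. Then for every sufficiently small rotation of v off H_x toward the side where x'v' > 0, the resulting direction v' satisfies y'v' > 0 for all y ∈ X_C^+ and y'v' < 0 for all y ∈ X_C^-. (Converse direction of Theorem 1(i): strict separability in the projection implies the hyperplane H_x contains a facet of the cone C.) -/

import Mathlib

open Finset
open scoped Classical

theorem stmt10 {d : ℕ} (P N : Finset (EuclideanSpace ℝ (Fin d)))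
    (x v : EuclideanSpace ℝ (Fin d)) (hx0 : x ≠ 0) (hxP : x ∈ P)
    (hv : ‖v‖ = 1) (hvx : (inner ℝ x v : ℝ) = 0)
    (hP : ∀ y ∈ P, y ≠ x → (0 : ℝ) < inner ℝ y v)
    (hN : ∀ y ∈ N, (inner ℝ y v : ℝ) < 0) :
    ∃ ε₀ > (0 : ℝ), ∀ ε : ℝ, 0 < ε → ε < ε₀ →
      (∀ y ∈ P, (0 : ℝ) < inner ℝ y (v + ε • x)) ∧
      (∀ y ∈ N, (inner ℝ y (v + ε • x) : ℝ) < 0) := by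
  classical
  set S : Finset (EuclideanSpace ℝ (Fin d)) := (P.erase x) ∪ N with hS
  set f : EuclideanSpace ℝ (Fin d) → ℝ :=
    fun y => |(inner ℝ y v : ℝ)| / (|(inner ℝ y x : ℝ)| + 1) with hf
  have hfpos : ∀ y ∈ S, 0 < f y := by
    intro y hy
    have hne : (inner ℝ y v : ℝ) ≠ 0 := by
      rcases Finset.mem_union.mp hy with h | h
      · exact ne_of_gt (hP y (Finset.mem_of_mem_erase h) (Finset.ne_of_mem_erase h))
      · exact ne_of_lt (hN y h)
    have h1 : (0:ℝ) < |(inner ℝ y v : ℝ)| := abs_pos.mpr hne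
    have h2 : (0:ℝ) < |(inner ℝ y x : ℝ)| + 1 := by positivity
    exact div_pos h1 h2
  obtain ⟨ε₀, hε₀pos, hε₀⟩ : ∃ ε₀ > (0:ℝ), ∀ y ∈ S, ε₀ ≤ f y := by
    rcases S.eq_empty_or_nonempty with h | h
    · exact ⟨1, one_pos, by simp [h]⟩
    · exact ⟨S.inf' h f, (Finset.lt_inf'_iff h).mpr (fun y hy => hfpos y hy),
        fun y hy => Finset.inf'_le f hy⟩
  refine ⟨ε₀, hε₀pos, fun ε hε hεlt => ?_⟩
  have key : ∀ y ∈ S, ε * |(inner ℝ y x : ℝ)| < |(inner ℝ y v : ℝ)| := by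
    intro y hy
    have h1 : ε < f y := lt_of_lt_of_le hεlt (hε₀ y hy)
    have hb : (0:ℝ) ≤ |(inner ℝ y x : ℝ)| := abs_nonneg _
    rw [hf] at h1
    simp only at h1
    rw [lt_div_iff₀ (by positivity)] at h1
    nlinarith
  constructor
  · intro y hy
    rw [inner_add_right, real_inner_smul_right]
    by_cases hyx : y = x
    · have hpos : (0:ℝ) < inner ℝ x x := by
        rw [real_inner_self_eq_norm_sq]
        exact pow_pos (norm_pos_iff.mpr hx0) 2
      rw [hyx, hvx]
      nlinarith
    · have hyS : y ∈ S := Finset.mem_union_left _ (Finset.mem_erase.mpr ⟨hyx, hy⟩)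
      have hk := key y hyS
      have hv' := hP y hy hyx
      rw [abs_of_pos hv'] at hk
      have hlow : ε * (-|(inner ℝ y x : ℝ)|) ≤ ε * inner ℝ y x :=
        mul_le_mul_of_nonneg_left (neg_abs_le _) hε.le
      nlinarith
  · intro y hy
    rw [inner_add_right, real_inner_smul_right]
    have hyS : y ∈ S := Finset.mem_union_right _ hy
    have hk := key y hyS
    have hv' := hN y hy
    rw [abs_of_neg hv'] at hk
    have hup : ε * inner ℝ y x ≤ ε * |(inner ℝ y x : ℝ)| :=
      mul_le_mul_of_nonneg_left (le_abs_self _) hε.le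
    nlinarith
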